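/- arXiv:1609.01652 — 2 statements merged into one kernel-verified Lean document; each statement's English description precedes it below -/
import Mathlib

section
/- Let z ∈ ℂ^N be a unit vector, d a positive integer, and let g_{kp}, for k ∈ {1,...,d} and p ∈ {1,...,N}, be independent random variables each uniformly distributed on {1, −1, i, −i}. Define z' ∈ ℂ^d by (z')_k = (1/√d)·Σ_p g_{kp} z_p. Then E[‖z'‖⁴] = 1 + 1/d − (1/d)·Σ_p |z_p|⁴ ≤ 1 + 1/d. -/
lemma K1 (a b : ℂ) : ∑ x : Fin 4, Complex.normSq (Complex.I ^ (x : ℕ) * b + a)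
    = 4 * (Complex.normSq a + Complex.normSq b) := by
  simp [Fin.sum_univ_four, show ((0:Fin 4):ℕ) = 0 from rfl, show ((1:Fin 4):ℕ) = 1 from rfl,
    show ((2:Fin 4):ℕ) = 2 from rfl, show ((3:Fin 4):ℕ) = 3 from rfl,
    Complex.normSq_apply, Complex.add_re, Complex.add_im,
    Complex.mul_re, Complex.mul_im, pow_succ]
  ring

lemma K2 (a b : ℂ) : ∑ x : Fin 4, Complex.normSq (Complex.I ^ (x : ℕ) * b + a) ^ 2
    = 4 * ((Complex.normSq a + Complex.normSq b) ^ 2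
        + 2 * Complex.normSq a * Complex.normSq b) := by
  simp [Fin.sum_univ_four, show ((0:Fin 4):ℕ) = 0 from rfl, show ((1:Fin 4):ℕ) = 1 from rfl,
    show ((2:Fin 4):ℕ) = 2 from rfl, show ((3:Fin 4):ℕ) = 3 from rfl,
    Complex.normSq_apply, Complex.add_re, Complex.add_im,
    Complex.mul_re, Complex.mul_im, pow_succ]
  ring

lemma E1 : ∀ (N : ℕ) (z : Fin N → ℂ),
    ∑ g : Fin N → Fin 4, Complex.normSq (∑ p, Complex.I ^ ((g p : ℕ)) * z p)
      = 4 ^ N * ∑ p, Complex.normSq (z p) := by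
  intro N
  induction N with
  | zero => simp
  | succ n ih =>
    intro z
    rw [← (Fin.consEquiv (fun _ : Fin (n+1) => Fin 4)).sum_comp
      (fun g => Complex.normSq (∑ p, Complex.I ^ ((g p : ℕ)) * z p))]
    rw [Fintype.sum_prod_type]
    have key : ∀ (x : Fin 4) (g' : Fin n → Fin 4),
        (∑ p, Complex.I ^ ((((Fin.consEquiv (fun _ : Fin (n+1) => Fin 4)) (x, g')) p : ℕ)) * z p)
        = Complex.I ^ (x : ℕ) * z 0
          + ∑ p : Fin n, Complex.I ^ ((g' p : ℕ)) * z p.succ := by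
      intro x g'
      rw [Fin.sum_univ_succ]
      simp [Fin.consEquiv]
    simp only [key]
    rw [Finset.sum_comm]
    simp only [fun g' : Fin n → Fin 4 =>
      K1 (∑ p : Fin n, Complex.I ^ ((g' p : ℕ)) * z p.succ) (z 0)]
    rw [Fin.sum_univ_succ (f := fun p => Complex.normSq (z p))]
    simp [Finset.sum_add_distrib, ← Finset.mul_sum, ih (fun p => z p.succ),
      Finset.card_univ]
    ring

lemma E2 : ∀ (N : ℕ) (z : Fin N → ℂ),
    ∑ g : Fin N → Fin 4, Complex.normSq (∑ p, Complex.I ^ ((g p : ℕ)) * z p) ^ 2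
      = 4 ^ N * (2 * (∑ p, Complex.normSq (z p)) ^ 2
          - ∑ p, Complex.normSq (z p) ^ 2) := by
  intro N
  induction N with
  | zero => simp
  | succ n ih =>
    intro z
    rw [← (Fin.consEquiv (fun _ : Fin (n+1) => Fin 4)).sum_comp
      (fun g => Complex.normSq (∑ p, Complex.I ^ ((g p : ℕ)) * z p) ^ 2)]
    rw [Fintype.sum_prod_type]
    have key : ∀ (x : Fin 4) (g' : Fin n → Fin 4),
        (∑ p, Complex.I ^ ((((Fin.consEquiv (fun _ : Fin (n+1) => Fin 4)) (x, g')) p : ℕ)) * z p)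
        = Complex.I ^ (x : ℕ) * z 0
          + ∑ p : Fin n, Complex.I ^ ((g' p : ℕ)) * z p.succ := by
      intro x g'
      rw [Fin.sum_univ_succ]
      simp [Fin.consEquiv]
    simp only [key]
    rw [Finset.sum_comm]
    simp only [fun g' : Fin n → Fin 4 =>
      K2 (∑ p : Fin n, Complex.I ^ ((g' p : ℕ)) * z p.succ) (z 0)]
    rw [Fin.sum_univ_succ (f := fun p => Complex.normSq (z p)),
      Fin.sum_univ_succ (f := fun p => Complex.normSq (z p) ^ 2)]
    simp only [mul_add, add_sq, mul_sub, Finset.sum_add_distrib, Finset.sum_sub_distrib,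
      ← Finset.mul_sum, ih (fun p => z p.succ), E1 n (fun p => z p.succ),
      Finset.sum_const, Finset.card_univ, nsmul_eq_mul]
    have hs : ∑ x : Fin n → Fin 4,
        2 * Complex.normSq (∑ p : Fin n, Complex.I ^ ((x p : ℕ)) * z p.succ) * Complex.normSq (z 0)
        = 2 * (4 ^ n * ∑ p : Fin n, Complex.normSq (z p.succ)) * Complex.normSq (z 0) := by
      rw [← Finset.sum_mul, ← Finset.mul_sum, E1 n (fun p => z p.succ)]
    simp [Finset.card_univ]
    simp only [hs]
    ring

lemma Llem {R : Type*} [Fintype R] (Y : R → ℝ) :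
    ∀ d : ℕ, (Fintype.card R : ℝ) * ∑ H : Fin d → R, ∑ k, Y (H k)
      = (d : ℝ) * (Fintype.card R : ℝ) ^ d * ∑ r, Y r := by
  intro d
  induction d with
  | zero => simp
  | succ n ih =>
    rw [← (Fin.consEquiv (fun _ : Fin (n+1) => R)).sum_comp
      (fun H => ∑ k, Y (H k))]
    rw [Fintype.sum_prod_type]
    have key : ∀ (x : R) (H' : Fin n → R),
        (∑ k, Y (((Fin.consEquiv (fun _ : Fin (n+1) => R)) (x, H')) k))
        = Y x + ∑ k : Fin n, Y (H' k) := by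
      intro x H'
      rw [Fin.sum_univ_succ]
      simp [Fin.consEquiv]
    simp only [key]
    simp only [Finset.sum_add_distrib, Finset.sum_const, Finset.card_univ, nsmul_eq_mul]
    rw [ih, ← Finset.mul_sum]
    simp only [Fintype.card_fun, Fintype.card_fin]
    push_cast
    ring

lemma Tlem {R : Type*} [Fintype R] (Y : R → ℝ) :
    ∀ d : ℕ, (Fintype.card R : ℝ) ^ 2 * ∑ H : Fin d → R, (∑ k, Y (H k)) ^ 2
      = (Fintype.card R : ℝ) ^ d * ((d : ℝ) * (Fintype.card R : ℝ) * (∑ r, Y r ^ 2)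
          + (d : ℝ) * ((d : ℝ) - 1) * (∑ r, Y r) ^ 2) := by
  intro d
  induction d with
  | zero => simp
  | succ n ih =>
    rw [← (Fin.consEquiv (fun _ : Fin (n+1) => R)).sum_comp (fun H => (∑ k, Y (H k)) ^ 2)]
    rw [Fintype.sum_prod_type]
    have key : ∀ (x : R) (H' : Fin n → R),
        (∑ k, Y (((Fin.consEquiv (fun _ : Fin (n+1) => R)) (x, H')) k))
        = Y x + ∑ k : Fin n, Y (H' k) := by
      intro x H'
      rw [Fin.sum_univ_succ]
      simp [Fin.consEquiv]
    simp only [key, add_sq, Finset.sum_add_distrib, Finset.sum_const, Finset.card_univ,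
      nsmul_eq_mul, Fintype.card_fun, Fintype.card_fin]
    have hmid : ∀ x : R, ∑ H : Fin n → R, 2 * Y x * (∑ k, Y (H k))
        = 2 * Y x * ∑ H : Fin n → R, ∑ k, Y (H k) := fun x => (Finset.mul_sum _ _ _).symm
    simp only [hmid, ← Finset.sum_mul, ← Finset.mul_sum]
    push_cast
    linear_combination (Fintype.card R : ℝ) * ih
      + 2 * (∑ r : R, Y r) * (Fintype.card R : ℝ) * Llem Y n

/-- For a unit vector `z ∈ ℂ^N` and i.i.d. coefficients `g_{kp}`
uniform on the fourth roots of unity `{1, −1, i, −i}`, the projected vector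
`z'_k = (1/√d)·Σ_p g_{kp} z_p` satisfies
`E[‖z'‖⁴] = 1 + 1/d − (1/d)·Σ_p |z_p|⁴ ≤ 1 + 1/d`. -/
theorem stmt8 {N d : ℕ} (hd : 0 < d) (z : Fin N → ℂ)
    (hz : ∑ p, ‖z p‖ ^ 2 = 1) :
    (∑ G : Fin d × Fin N → Fin 4,
        (∑ k : Fin d,
          ‖((Real.sqrt d : ℂ))⁻¹ *
            ∑ p, Complex.I ^ ((G (k, p) : ℕ)) * z p‖ ^ 2) ^ 2)
        / (Fintype.card (Fin d × Fin N → Fin 4) : ℝ)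
      = 1 + 1 / (d : ℝ) - (1 / (d : ℝ)) * ∑ p, ‖z p‖ ^ 4
    ∧ (1 : ℝ) + 1 / (d : ℝ) - (1 / (d : ℝ)) * ∑ p, ‖z p‖ ^ 4
        ≤ 1 + 1 / (d : ℝ) := by
  have hd' : (0:ℝ) < (d:ℝ) := by exact_mod_cast hd
  constructor
  · have hz' : ∑ p, Complex.normSq (z p) = 1 := by
      simp only [Complex.sq_norm] at hz; exact hz
    have hB : ∑ p, ‖z p‖ ^ 4 = ∑ p, Complex.normSq (z p) ^ 2 := by
      refine Finset.sum_congr rfl fun p _ => ?_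
      rw [show (4:ℕ) = 2*2 from rfl, pow_mul, Complex.sq_norm]
    have habs : ∀ w : ℂ,
        ‖((Real.sqrt d : ℂ))⁻¹ * w‖ ^ 2 = ((d:ℝ))⁻¹ * Complex.normSq w := by
      intro w
      rw [Complex.sq_norm, map_mul, map_inv₀, Complex.normSq_ofReal,
        Real.mul_self_sqrt (Nat.cast_nonneg d)]
    simp only [habs, ← Finset.mul_sum, mul_pow]
    set Y : (Fin N → Fin 4) → ℝ :=
      fun r => Complex.normSq (∑ p, Complex.I ^ ((r p : ℕ)) * z p) with hY
    have hcurry : ∑ G : Fin d × Fin N → Fin 4,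
          (∑ k : Fin d, Complex.normSq (∑ p, Complex.I ^ ((G (k, p) : ℕ)) * z p)) ^ 2
        = ∑ H : Fin d → (Fin N → Fin 4), (∑ k : Fin d, Y (H k)) ^ 2 := by
      rw [← (Equiv.curry (Fin d) (Fin N) (Fin 4)).sum_comp
        (fun H : Fin d → (Fin N → Fin 4) => (∑ k : Fin d, Y (H k)) ^ 2)]
      rfl
    rw [hcurry]
    have hT := Tlem Y d
    have hcard : (Fintype.card (Fin N → Fin 4) : ℝ) = 4 ^ N := by
      simp [Fintype.card_fun]
    have he1 : ∑ r, Y r = 4 ^ N := by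
      rw [hY]; rw [E1 N z, hz', mul_one]
    have he2 : ∑ r, Y r ^ 2 = 4 ^ N * (2 - ∑ p, Complex.normSq (z p) ^ 2) := by
      rw [hY]; rw [E2 N z, hz']; ring
    rw [hcard, he1, he2] at hT
    have h4 : ((4:ℝ) ^ N) ≠ 0 := by positivity
    have hS : ∑ H : Fin d → (Fin N → Fin 4), (∑ k : Fin d, Y (H k)) ^ 2
        = ((4:ℝ) ^ N) ^ d * ((d:ℝ) * (2 - ∑ p, Complex.normSq (z p) ^ 2)
            + (d:ℝ) * ((d:ℝ) - 1)) := by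
      refine mul_left_cancel₀ (a := ((4:ℝ) ^ N) ^ 2) (by positivity) ?_
      rw [hT]; ring
    have hcard2 : (Fintype.card (Fin d × Fin N → Fin 4) : ℝ) = ((4:ℝ) ^ N) ^ d := by
      simp only [Fintype.card_fun, Fintype.card_prod, Fintype.card_fin]
      push_cast
      rw [← pow_mul, mul_comm N d]
    rw [hS, hB, hcard2]
    have h4d : ((4:ℝ) ^ N) ^ d ≠ 0 := by positivity
    field_simp
    ring
  · have h0 : (0:ℝ) ≤ (1 / (d:ℝ)) * ∑ p, ‖z p‖ ^ 4 := by positivity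
    linarith
end

section
/- Let A₁, ..., Aₙ be pairwise anticommuting observables on ℂ^d (Hermitian, Aᵢ² = Id, AᵢAⱼ + AⱼAᵢ = 0 for i≠j), and let |ψ⟩ = d^{−1/2} Σ_{i=1}^d |i⟩|i⟩ be the maximally entangled state on ℂ^d ⊗ ℂ^d. For i ≠ j define B_{ij} = ((−1)^{[j<i]} Aᵢᵀ + Aⱼᵀ)/√2, where [j<i] is 1 if j < i and 0 otherwise. Then each B_{ij} is an observable, and for every i < j: ⟨ψ| Aᵢ ⊗ B_{ij} |ψ⟩ = ⟨ψ| Aᵢ ⊗ B_{ji} |ψ⟩ = ⟨ψ| Aⱼ ⊗ B_{ij} |ψ⟩ = −⟨ψ| Aⱼ ⊗ B_{ji} |ψ⟩ = 1/√2. -/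
open Matrix Kronecker


private lemma key18 {d : ℕ} (M N : Matrix (Fin d) (Fin d) ℂ)
    (ψ : EuclideanSpace ℂ (Fin d × Fin d))
    (hψ : ψ = (show EuclideanSpace ℂ (Fin d × Fin d) from WithLp.toLp 2
      fun (p : Fin d × Fin d) => if p.1 = p.2 then ((Real.sqrt d : ℂ))⁻¹ else 0)) :
    (inner ℂ ψ (Matrix.toEuclideanLin (M ⊗ₖ N) ψ) : ℂ) = (d : ℂ)⁻¹ * (M * Nᵀ).trace := by
  have hs : (starRingEnd ℂ) ((Real.sqrt d : ℂ))⁻¹ * ((Real.sqrt d : ℂ))⁻¹ = (d : ℂ)⁻¹ := by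
    rw [← Complex.ofReal_inv, Complex.conj_ofReal, ← Complex.ofReal_mul,
      ← mul_inv, Real.mul_self_sqrt (Nat.cast_nonneg d)]
    norm_num
  subst hψ
  rw [PiLp.inner_apply]
  simp only [Matrix.toEuclideanLin_apply, Matrix.mulVec, dotProduct, Matrix.kroneckerMap_apply,
    RCLike.inner_apply, PiLp.toLp_apply, WithLp.ofLp_toLp,
    mul_ite, mul_zero, ite_mul, zero_mul, mul_one]
  simp only [Fintype.sum_prod_type]
  simp only [Finset.sum_ite_eq, Finset.sum_ite_eq', Finset.mem_univ, if_true, apply_ite,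
    map_zero, Finset.sum_ite_irrel, Finset.sum_const_zero]
  rw [Matrix.trace, Finset.mul_sum]
  refine Finset.sum_congr rfl fun a _ => ?_
  simp only [ite_mul, zero_mul, mul_zero, Finset.sum_ite_eq, Finset.mem_univ, if_true]
  simp only [Matrix.diag_apply, Matrix.mul_apply, Matrix.transpose_apply]
  simp only [Finset.mul_sum, Finset.sum_mul]
  exact Finset.sum_congr rfl fun b _ => by rw [← hs]; ring

private lemma sq_helper18 {d : ℕ} (X Y : Matrix (Fin d) (Fin d) ℂ) (ε : ℂ) (hε : ε * ε = 1)
    (hX : X * X = 1) (hY : Y * Y = 1) (hXY : X * Y + Y * X = 0) :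
    (ε • X + Y) * (ε • X + Y) = (2 : ℂ) • 1 := by
  rw [add_mul, mul_add, mul_add, smul_mul_smul_comm, hε, smul_mul_assoc, mul_smul_comm, hX, hY,
    one_smul]
  calc 1 + ε • (X * Y) + (ε • (Y * X) + 1)
      = (1 + 1) + (ε • (X * Y) + ε • (Y * X)) := by abel
    _ = (2 : ℂ) • 1 := by rw [← smul_add, hXY, smul_zero, add_zero, two_smul]

/-- For pairwise anticommuting observables `A₁, ..., Aₙ` on
`ℂ^d`, the maximally entangled state `ψ`, and Bob's observables
`B_{ij} = ((−1)^{[j<i]} Aᵢᵀ + Aⱼᵀ)/√2`, each `B_{ij}` is an observable and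
for `i < j` the correlations `⟨ψ|Aᵢ ⊗ B_{ij}|ψ⟩ = ⟨ψ|Aᵢ ⊗ B_{ji}|ψ⟩
= ⟨ψ|Aⱼ ⊗ B_{ij}|ψ⟩ = −⟨ψ|Aⱼ ⊗ B_{ji}|ψ⟩ = 1/√2`. -/
theorem stmt18 {n d : ℕ} (hn : 2 ≤ n) (hd : 0 < d)
    (A : Fin n → Matrix (Fin d) (Fin d) ℂ)
    (hherm : ∀ i, (A i).IsHermitian) (hsq : ∀ i, A i * A i = 1)
    (hac : ∀ i j, i ≠ j → A i * A j + A j * A i = 0)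
    (ψ : EuclideanSpace ℂ (Fin d × Fin d))
    (hψ : ψ = (show EuclideanSpace ℂ (Fin d × Fin d) from WithLp.toLp 2
      fun (p : Fin d × Fin d) => if p.1 = p.2 then ((Real.sqrt d : ℂ))⁻¹ else 0))
    (B : Fin n → Fin n → Matrix (Fin d) (Fin d) ℂ)
    (hB : ∀ i j, i ≠ j → B i j = ((Real.sqrt 2 : ℂ))⁻¹ •
      ((if j < i then (-1 : ℂ) else 1) • (A i)ᵀ + (A j)ᵀ)) :
    (∀ i j, i ≠ j → (B i j).IsHermitian ∧ B i j * B i j = 1) ∧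
    (∀ i j, i < j →
      (inner ℂ ψ (Matrix.toEuclideanLin ((A i) ⊗ₖ (B i j)) ψ) : ℂ) = ((Real.sqrt 2 : ℂ))⁻¹ ∧
      (inner ℂ ψ (Matrix.toEuclideanLin ((A i) ⊗ₖ (B j i)) ψ) : ℂ) = ((Real.sqrt 2 : ℂ))⁻¹ ∧
      (inner ℂ ψ (Matrix.toEuclideanLin ((A j) ⊗ₖ (B i j)) ψ) : ℂ) = ((Real.sqrt 2 : ℂ))⁻¹ ∧
      (inner ℂ ψ (Matrix.toEuclideanLin ((A j) ⊗ₖ (B j i)) ψ) : ℂ) = -((Real.sqrt 2 : ℂ))⁻¹) := by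
  have hc2 : ((Real.sqrt 2 : ℂ))⁻¹ * ((Real.sqrt 2 : ℂ))⁻¹ = (2 : ℂ)⁻¹ := by
    rw [← mul_inv, ← Complex.ofReal_mul, Real.mul_self_sqrt (by norm_num)]
    norm_num
  have tr0 : ∀ i j, i ≠ j → (A i * A j).trace = 0 := by
    intro i j hij
    have h := congrArg Matrix.trace (hac i j hij)
    rw [Matrix.trace_add, Matrix.trace_zero, Matrix.trace_mul_comm (A j) (A i)] at h
    have : (2 : ℂ) * (A i * A j).trace = 0 := by linear_combination h
    simpa using this
  have trd : ∀ i, (A i * A i).trace = (d : ℂ) := by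
    intro i; rw [hsq, Matrix.trace_one]; simp
  have hTsq : ∀ k, (A k)ᵀ * (A k)ᵀ = 1 := fun k => by
    rw [← Matrix.transpose_mul, hsq, Matrix.transpose_one]
  have hTac : ∀ i j, i ≠ j → (A i)ᵀ * (A j)ᵀ + (A j)ᵀ * (A i)ᵀ = 0 := by
    intro i j hij
    rw [← Matrix.transpose_mul, ← Matrix.transpose_mul, ← Matrix.transpose_add,
      hac j i hij.symm, Matrix.transpose_zero]
  -- general correlation computation
  have corr : ∀ i j k, i ≠ j →
      (inner ℂ ψ (Matrix.toEuclideanLin ((A k) ⊗ₖ (B i j)) ψ) : ℂ)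
        = (d : ℂ)⁻¹ * ((Real.sqrt 2 : ℂ))⁻¹ *
          ((if j < i then (-1 : ℂ) else 1) * (A k * A i).trace + (A k * A j).trace) := by
    intro i j k hij
    rw [key18 _ _ ψ hψ, hB i j hij]
    rw [Matrix.transpose_smul, Matrix.transpose_add, Matrix.transpose_smul,
      Matrix.transpose_transpose, Matrix.transpose_transpose, Matrix.mul_smul,
      Matrix.trace_smul, Matrix.mul_add, Matrix.trace_add, Matrix.mul_smul, Matrix.trace_smul]
    simp only [smul_eq_mul]
    ring
  constructor
  · intro i j hij
    constructor
    · rw [hB i j hij]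
      have hi := (hherm i).transpose
      have hj := (hherm j).transpose
      unfold Matrix.IsHermitian at hi hj ⊢
      rw [Matrix.conjTranspose_smul, Matrix.conjTranspose_add, Matrix.conjTranspose_smul,
        hi, hj]
      congr 1
      · rw [← Complex.ofReal_inv]; exact Complex.conj_ofReal _
      · congr 1
        split <;> simp
    · rw [hB i j hij, smul_mul_smul_comm, hc2,
        sq_helper18 _ _ _ (by split <;> norm_num) (hTsq i) (hTsq j) (hTac i j hij),
        smul_smul]
      norm_num
  · intro i j hij
    have hd' : (d : ℂ) ≠ 0 := Nat.cast_ne_zero.2 hd.ne'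
    have hij' : ¬ j < i := not_lt.2 hij.le
    refine ⟨?_, ?_, ?_, ?_⟩
    · rw [corr i j i hij.ne, if_neg hij', trd, tr0 i j hij.ne]
      field_simp
      ring
    · rw [corr j i i hij.ne', if_pos hij, tr0 i j hij.ne, trd]
      field_simp
      ring
    · rw [corr i j j hij.ne, if_neg hij', tr0 j i hij.ne', trd]
      field_simp
      ring
    · rw [corr j i j hij.ne', if_pos hij, trd, tr0 j i hij.ne']
      field_simp
      ring
end
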